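/- Let C = conv{γ₁, γ₂} ⊂ ℝ³ with γ₁(s) = (−s, −s², −s³) for s ∈ [0,1] and γ₂(t) = (−t, t², 0) for t ∈ [0, (2+√7)/3], and let K = cone(C × {1}) ⊂ ℝ⁴. Then the tangent cone to K at the origin, T(0;K) = cl cone{κ₁ ∪ κ₂} with κ₁(s) = (−1, −s, −s²) and κ₂(t) = (−1, t, 0) (after rescaling), is not facially exposed: its slice conv{(−s, −s²) : s ∈ [0,1]} ∪ {(−1,t,0) : t ∈ [0,(2+√7)/3]} (in the plane of the first slice coordinates) has {(0,0)} as an unexposed face. In particular, K is not strongly tangentially exposed. -/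

import Mathlib

/- Common definitions following "Facially Dual Complete (Nice) cones and
lexicographic tangents" by V. Roshchina and L. Tunçel. -/

open Set Filter
open scoped Pointwise

local notation "⟪" x ", " y "⟫" => @inner ℝ _ _ x y

variable {E : Type*} [NormedAddCommGroup E] [InnerProductSpace ℝ E]

/-- The tangent cone to a set `C` at `x`: the closure of the cone of feasible
directions `{d : x + ε • d ∈ C for some ε > 0}`. -/
def TangCone (x : E) (C : Set E) : Set E :=
  closure {d : E | ∃ ε : ℝ, 0 < ε ∧ x + ε • d ∈ C}

/-- `F` is a face of the convex set `C`: a closed convex subset such that any open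
segment of `C` whose interior meets `F` has both endpoints in `F`. -/
def IsFaceOf (F C : Set E) : Prop :=
  F ⊆ C ∧ Convex ℝ F ∧ IsClosed F ∧
    ∀ x ∈ F, ∀ y ∈ C, ∀ z ∈ C, x ∈ openSegment ℝ y z → y ∈ F ∧ z ∈ F

/-- A proper face: a nonempty face different from the whole set. -/
def IsProperFaceOf (F C : Set E) : Prop := IsFaceOf F C ∧ F.Nonempty ∧ F ≠ C

/-- The dual cone `K* = {s : ⟨s,x⟩ ≥ 0 for all x ∈ K}`. -/
def DualCone' (K : Set E) : Set E := {s : E | ∀ x ∈ K, 0 ≤ ⟪s, x⟫}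

/-- `F^⊥ = {s : ⟨s,x⟩ = 0 for all x ∈ F}`. -/
def PerpOf (F : Set E) : Set E := {s : E | ∀ x ∈ F, ⟪s, x⟫ = 0}

/-- Facial dual completeness: `K* + F^⊥` is closed for every proper face `F` of `K`. -/
def IsFDC (K : Set E) : Prop :=
  ∀ F : Set E, IsProperFaceOf F K → IsClosed (DualCone' K + PerpOf F)

/-- Tangential exposure: `T(x;C) ∩ span F = T(x;F)` for every proper face `F` and `x ∈ F`. -/
def TangentiallyExposed (C : Set E) : Prop :=
  ∀ F : Set E, IsProperFaceOf F C → ∀ x ∈ F,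
    TangCone x C ∩ (Submodule.span ℝ F : Set E) = TangCone x F

/-- The family of all tangent cones of members of a family of sets. -/
def TangFamily (𝒦 : Set (Set E)) : Set (Set E) :=
  {T | ∃ C ∈ 𝒦, ∃ x ∈ C, T = TangCone x C}

/-- `𝒯^k(C)`: the `k`-fold iterated tangent-cone families of `C`;
its members are the lexicographic tangent cones (of order `k`) of `C`. -/
def TangIter (C : Set E) : ℕ → Set (Set E)
  | 0 => {C}
  | k + 1 => TangFamily (TangIter C k)

/-- Strong tangential exposure: `C` and all of its lexicographic tangent cones are
tangentially exposed. -/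
def StronglyTangentiallyExposed (C : Set E) : Prop :=
  ∀ k : ℕ, ∀ T ∈ TangIter C k, TangentiallyExposed T

/-- `F` is an exposed face of `C`: the set of maximizers over `C` of some linear functional. -/
def IsExposedFaceOf (F C : Set E) : Prop :=
  ∃ p : E, F = {x ∈ C | ∀ y ∈ C, ⟪p, y⟫ ≤ ⟪p, x⟫}

/-- `C` is facially exposed: every proper face of `C` is exposed. -/
def FaciallyExposed (C : Set E) : Prop :=
  ∀ F : Set E, IsProperFaceOf F C → IsExposedFaceOf F C

/-- The normal cone to `C` at `x`. -/
def NormalCone' (x : E) (C : Set E) : Set E := {s : E | ∀ y ∈ C, ⟪s, y - x⟫ ≤ 0}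

/-- The minimal face of `C` containing `S`. -/
def MinimalFace (S C : Set E) : Set E := ⋂₀ {F : Set E | IsFaceOf F C ∧ S ⊆ F}

/-- `K` is a cone: closed under positive scalar multiplication. -/
def IsConeSet (K : Set E) : Prop := ∀ c : ℝ, 0 < c → ∀ x ∈ K, c • x ∈ K

noncomputable section CubicExample

/-- Shorthand for vectors in `ℝ³`. -/
def v3 (a b c : ℝ) : EuclideanSpace ℝ (Fin 3) := WithLp.toLp 2 ![a, b, c]

/-- Shorthand for vectors in `ℝ⁴`. -/
def v4 (a b c d : ℝ) : EuclideanSpace ℝ (Fin 4) := WithLp.toLp 2 ![a, b, c, d]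

/-- The twisted cubic piece `γ₁(s) = (−s, −s², −s³)`. -/
def γ₁ (s : ℝ) : EuclideanSpace ℝ (Fin 3) := v3 (-s) (-s ^ 2) (-s ^ 3)

/-- The parabola piece `γ₂(t) = (−t, t², 0)`. -/
def γ₂ (t : ℝ) : EuclideanSpace ℝ (Fin 3) := v3 (-t) (t ^ 2) 0

/-- `C = conv{γ₁, γ₂}` with `s ∈ [0,1]`, `t ∈ [0, (2+√7)/3]`. -/
def Cset : Set (EuclideanSpace ℝ (Fin 3)) :=
  convexHull ℝ (γ₁ '' Icc 0 1 ∪ γ₂ '' Icc 0 ((2 + Real.sqrt 7) / 3))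

/-- The lifting `p ↦ (p, 1)` of `ℝ³` into `ℝ⁴`. -/
def lift (p : EuclideanSpace ℝ (Fin 3)) : EuclideanSpace ℝ (Fin 4) :=
  v4 (p 0) (p 1) (p 2) 1

/-- `K = cone(C × {1})`, the closed conic hull. -/
def Kcone : Set (EuclideanSpace ℝ (Fin 4)) :=
  closure {v | ∃ c : ℝ, 0 ≤ c ∧ ∃ p ∈ Cset, v = c • lift p}

/-- `F₂ = conv{γ₂}`, a face of `C`. -/
def F₂ : Set (EuclideanSpace ℝ (Fin 3)) :=
  convexHull ℝ (γ₂ '' Icc 0 ((2 + Real.sqrt 7) / 3))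

/-- `F = cone(F₂ × {1})`, the corresponding face of `K`. -/
def Fface : Set (EuclideanSpace ℝ (Fin 4)) :=
  closure {v | ∃ c : ℝ, 0 ≤ c ∧ ∃ p ∈ F₂, v = c • lift p}

/-- The polar cone `K° = −K*`. -/
def Kpolar : Set (EuclideanSpace ℝ (Fin 4)) := {s | ∀ x ∈ Kcone, ⟪s, x⟫ ≤ 0}

/-- Shorthand for vectors in `ℝ²`. -/
def v2 (a b : ℝ) : EuclideanSpace ℝ (Fin 2) := WithLp.toLp 2 ![a, b]

/-- The rescaled curve `κ₁(s) = (−1, −s, −s²)`. -/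
def κ₁ (s : ℝ) : EuclideanSpace ℝ (Fin 3) := v3 (-1) (-s) (-s ^ 2)

/-- The rescaled curve `κ₂(t) = (−1, t, 0)`. -/
def κ₂ (t : ℝ) : EuclideanSpace ℝ (Fin 3) := v3 (-1) t 0

/-- `cl cone{κ₁ ∪ κ₂}`, the closed conic hull of the two rescaled curves. -/
def Tcone : Set (EuclideanSpace ℝ (Fin 3)) :=
  closure {v | ∃ c : ℝ, 0 ≤ c ∧
    ∃ p ∈ convexHull ℝ (κ₁ '' Icc 0 1 ∪ κ₂ '' Icc 0 ((2 + Real.sqrt 7) / 3)), v = c • p}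

/-- The slice of `Tcone` (at first coordinate `−1`), written in the remaining two
coordinates: `conv({(−s, −s²) : s ∈ [0,1]} ∪ {(t, 0) : t ∈ [0, (2+√7)/3]})`. -/
def Dslice : Set (EuclideanSpace ℝ (Fin 2)) :=
  convexHull ℝ ({q | ∃ s ∈ Icc (0 : ℝ) 1, q = v2 (-s) (-s ^ 2)} ∪
    {q | ∃ t ∈ Icc (0 : ℝ) ((2 + Real.sqrt 7) / 3), q = v2 t 0})

/-! ### Auxiliary lemmas for the proof -/

section AuxGeneric

lemma sqrt_concave2 {a b x1 y1 x2 y2 : ℝ} (ha : 0 ≤ a) (hb : 0 ≤ b)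
    (hx1 : 0 ≤ x1) (hy1 : 0 ≤ y1) (hx2 : 0 ≤ x2) (hy2 : 0 ≤ y2) :
    a * Real.sqrt (x1*y1) + b * Real.sqrt (x2*y2) ≤ Real.sqrt ((a*x1+b*x2)*(a*y1+b*y2)) := by
  rw [show (a*x1+b*x2)*(a*y1+b*y2) = a^2*(x1*y1) + b^2*(x2*y2) + a*b*(x1*y2+x2*y1) by ring]
  have key : 2 * (Real.sqrt (x1*y1) * Real.sqrt (x2*y2)) ≤ x1*y2 + x2*y1 := by
    have h : Real.sqrt (x1*y1) * Real.sqrt (x2*y2) = Real.sqrt (x1*y2) * Real.sqrt (x2*y1) := by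
      rw [← Real.sqrt_mul (by positivity), ← Real.sqrt_mul (by positivity)]; ring_nf
    rw [h]
    nlinarith [sq_nonneg (Real.sqrt (x1*y2) - Real.sqrt (x2*y1)),
      Real.sq_sqrt (mul_nonneg hx1 hy2), Real.sq_sqrt (mul_nonneg hx2 hy1)]
  have h1 := Real.sq_sqrt (mul_nonneg hx1 hy1)
  have h2 := Real.sq_sqrt (mul_nonneg hx2 hy2)
  have hnn : 0 ≤ a * Real.sqrt (x1*y1) + b * Real.sqrt (x2*y2) := by positivity
  rw [show a * Real.sqrt (x1*y1) + b * Real.sqrt (x2*y2)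
      = Real.sqrt ((a * Real.sqrt (x1*y1) + b * Real.sqrt (x2*y2))^2) from
      (Real.sqrt_sq hnn).symm]
  apply Real.sqrt_le_sqrt
  nlinarith [mul_nonneg ha hb, key]

lemma pos_small {A B : ℝ} (hA : A < 0) : ∃ s : ℝ, 0 < s ∧ s ≤ 1 ∧ A*s + B*s^2 < 0 := by
  have hd : 0 < -A/(abs B+1) := div_pos (neg_pos.2 hA) (by positivity)
  refine ⟨min 1 (-A/(abs B+1)), lt_min one_pos hd, min_le_left _ _, ?_⟩
  set s := min 1 (-A/(abs B+1)) with hsdef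
  have hs0 : 0 < s := lt_min one_pos hd
  have hs2 : s ≤ -A/(abs B+1) := min_le_right _ _
  have hs3 : s * (abs B+1) ≤ -A := by
    rw [← le_div_iff₀ (by positivity)]; exact hs2
  have hB : B ≤ abs B := le_abs_self B
  have h1 : B*s^2 ≤ (abs B)*s*s := by nlinarith [sq_nonneg s, mul_pos hs0 hs0]
  have h2 : (abs B)*s ≤ -A - s := by nlinarith
  nlinarith [mul_pos hs0 hs0]

lemma feas_convex {x : E} {C : Set E} (hC : Convex ℝ C) (hx : x ∈ C) :
    Convex ℝ {d : E | ∃ ε : ℝ, 0 < ε ∧ x + ε • d ∈ C} := by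
  have key : ∀ (ei e : ℝ) (d : E), 0 < e → e ≤ ei → x + ei • d ∈ C → x + e • d ∈ C := by
    intro ei e d he hle hmem
    have hei : 0 < ei := lt_of_lt_of_le he hle
    have hne : ei ≠ 0 := ne_of_gt hei
    have h : x + e • d = (1 - e/ei) • x + (e/ei) • (x + ei • d) := by
      rw [smul_add, sub_smul, one_smul, smul_smul, div_mul_cancel₀ _ hne]
      abel
    rw [h]
    have h1 : 0 ≤ e/ei := by positivity
    have h2 : e/ei ≤ 1 := by rw [div_le_one hei]; exact hle
    exact hC hx hmem (by linarith) h1 (by ring)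
  rintro d1 ⟨e1, he1, hm1⟩ d2 ⟨e2, he2, hm2⟩ a b ha hb hab
  refine ⟨min e1 e2, lt_min he1 he2, ?_⟩
  have he : 0 < min e1 e2 := lt_min he1 he2
  have m1 : x + min e1 e2 • d1 ∈ C := key e1 _ d1 he (min_le_left _ _) hm1
  have m2 : x + min e1 e2 • d2 ∈ C := key e2 _ d2 he (min_le_right _ _) hm2
  have h : x + min e1 e2 • (a • d1 + b • d2)
      = a • (x + min e1 e2 • d1) + b • (x + min e1 e2 • d2) := by
    rw [show x + min e1 e2 • (a • d1 + b • d2)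
        = (a+b) • x + min e1 e2 • (a • d1 + b • d2) by rw [hab, one_smul]]
    module
  rw [h]
  exact hC m1 m2 ha hb hab

lemma tangCone_convex {x : E} {C : Set E} (hC : Convex ℝ C) (hx : x ∈ C) :
    Convex ℝ (TangCone x C) := (feas_convex hC hx).closure

end AuxGeneric
section CubicAux

lemma one_le_TT : (1:ℝ) ≤ (2 + Real.sqrt 7) / 3 := by
  have h : (1:ℝ) ≤ Real.sqrt 7 := by
    rw [show (1:ℝ) = Real.sqrt 1 by simp]
    exact Real.sqrt_le_sqrt (by norm_num)
  linarith

lemma TT_nonneg : (0:ℝ) ≤ (2 + Real.sqrt 7) / 3 := le_trans zero_le_one one_le_TT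

def Dhull : Set (EuclideanSpace ℝ (Fin 3)) :=
  convexHull ℝ (κ₁ '' Icc 0 1 ∪ κ₂ '' Icc 0 ((2 + Real.sqrt 7) / 3))

def preT : Set (EuclideanSpace ℝ (Fin 3)) := {v | ∃ c : ℝ, 0 ≤ c ∧ ∃ p ∈ Dhull, v = c • p}

def preK : Set (EuclideanSpace ℝ (Fin 4)) :=
  {v | ∃ c : ℝ, 0 ≤ c ∧ ∃ p ∈ Cset, v = c • lift p}

lemma Tcone_eq : Tcone = closure preT := rfl

lemma Kcone_eq : Kcone = closure preK := rfl

lemma kappa1_mem_Dhull {s : ℝ} (hs : s ∈ Icc (0:ℝ) 1) : κ₁ s ∈ Dhull :=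
  subset_convexHull ℝ _ (mem_union_left _ ⟨s, hs, rfl⟩)

lemma kappa2_mem_Dhull {t : ℝ} (ht : t ∈ Icc (0:ℝ) ((2 + Real.sqrt 7) / 3)) : κ₂ t ∈ Dhull :=
  subset_convexHull ℝ _ (mem_union_right _ ⟨t, ht, rfl⟩)

lemma gamma1_mem_Cset {s : ℝ} (hs : s ∈ Icc (0:ℝ) 1) : γ₁ s ∈ Cset :=
  subset_convexHull ℝ _ (mem_union_left _ ⟨s, hs, rfl⟩)

lemma gamma2_mem_Cset {t : ℝ} (ht : t ∈ Icc (0:ℝ) ((2 + Real.sqrt 7) / 3)) : γ₂ t ∈ Cset :=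
  subset_convexHull ℝ _ (mem_union_right _ ⟨t, ht, rfl⟩)

lemma kappa1_mem_Tcone {s : ℝ} (hs : s ∈ Icc (0:ℝ) 1) : κ₁ s ∈ Tcone :=
  subset_closure ⟨1, zero_le_one, κ₁ s, kappa1_mem_Dhull hs, (one_smul ℝ _).symm⟩

lemma kappa2_mem_Tcone {t : ℝ} (ht : t ∈ Icc (0:ℝ) ((2 + Real.sqrt 7) / 3)) : κ₂ t ∈ Tcone :=
  subset_closure ⟨1, zero_le_one, κ₂ t, kappa2_mem_Dhull ht, (one_smul ℝ _).symm⟩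

lemma gamma1_zero : γ₁ 0 = 0 := by
  ext i; fin_cases i <;> simp [γ₁, v3]

lemma zero_mem_Cset : (0 : EuclideanSpace ℝ (Fin 3)) ∈ Cset :=
  gamma1_zero ▸ gamma1_mem_Cset ⟨le_refl _, zero_le_one⟩

lemma gamma1_eq_smul (s : ℝ) : γ₁ s = s • κ₁ s := by
  ext i; fin_cases i <;> simp [γ₁, κ₁, v3] <;> ring

lemma gamma2_eq_smul (t : ℝ) : γ₂ t = t • κ₂ t := by
  ext i; fin_cases i <;> simp [γ₂, κ₂, v3] <;> ring

lemma kappa2_zero : κ₂ 0 = κ₁ 0 := by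
  ext i; fin_cases i <;> simp [κ₁, κ₂, v3]

def W3 : Set (EuclideanSpace ℝ (Fin 3)) :=
  {p | p 0 ≤ 0 ∧ p 2 ≤ 0 ∧ -Real.sqrt (p 0 * p 2) ≤ p 1}

lemma convex_W3 : Convex ℝ W3 := by
  rintro p ⟨hp0, hp2, hp1⟩ q ⟨hq0, hq2, hq1⟩ a b ha hb hab
  have e0 : (a • p + b • q) 0 = a * p 0 + b * q 0 := by simp
  have e1 : (a • p + b • q) 1 = a * p 1 + b * q 1 := by simp
  have e2 : (a • p + b • q) 2 = a * p 2 + b * q 2 := by simp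
  refine ⟨?_, ?_, ?_⟩
  · rw [e0]; nlinarith
  · rw [e2]; nlinarith
  · rw [e0, e1, e2]
    have key := sqrt_concave2 ha hb (neg_nonneg.2 hp0) (neg_nonneg.2 hp2)
      (neg_nonneg.2 hq0) (neg_nonneg.2 hq2)
    rw [show -p 0 * -p 2 = p 0 * p 2 by ring, show -q 0 * -q 2 = q 0 * q 2 by ring,
        show (a * -p 0 + b * -q 0) * (a * -p 2 + b * -q 2)
          = (a * p 0 + b * q 0) * (a * p 2 + b * q 2) by ring] at key
    have h1 : a * (-Real.sqrt (p 0 * p 2)) ≤ a * p 1 := mul_le_mul_of_nonneg_left hp1 ha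
    have h2 : b * (-Real.sqrt (q 0 * q 2)) ≤ b * q 1 := mul_le_mul_of_nonneg_left hq1 hb
    nlinarith

lemma isClosed_W3 : IsClosed W3 := by
  have c0 : Continuous fun p : EuclideanSpace ℝ (Fin 3) => p 0 := by fun_prop
  have c1 : Continuous fun p : EuclideanSpace ℝ (Fin 3) => p 1 := by fun_prop
  have c2 : Continuous fun p : EuclideanSpace ℝ (Fin 3) => p 2 := by fun_prop
  exact IsClosed.inter (isClosed_le c0 continuous_const)
    (IsClosed.inter (isClosed_le c2 continuous_const)
      (isClosed_le (((c0.mul c2).sqrt).neg) c1))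

lemma smul_mem_W3 {c : ℝ} (hc : 0 ≤ c) {p : EuclideanSpace ℝ (Fin 3)} (hp : p ∈ W3) :
    c • p ∈ W3 := by
  obtain ⟨hp0, hp2, hp1⟩ := hp
  have e0 : (c • p) 0 = c * p 0 := rfl
  have e1 : (c • p) 1 = c * p 1 := rfl
  have e2 : (c • p) 2 = c * p 2 := rfl
  refine ⟨?_, ?_, ?_⟩
  · rw [e0]; exact mul_nonpos_iff.2 (Or.inl ⟨hc, hp0⟩)
  · rw [e2]; exact mul_nonpos_iff.2 (Or.inl ⟨hc, hp2⟩)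
  · rw [e0, e1, e2, show c * p 0 * (c * p 2) = c^2 * (p 0 * p 2) by ring,
      Real.sqrt_mul (sq_nonneg c), Real.sqrt_sq hc]
    have := mul_le_mul_of_nonneg_left hp1 hc
    nlinarith

lemma gamma1_mem_W3 {s : ℝ} (hs : s ∈ Icc (0:ℝ) 1) : γ₁ s ∈ W3 := by
  obtain ⟨hs0, hs1⟩ := hs
  refine ⟨?_, ?_, ?_⟩ <;> simp only [γ₁, v3, W3, mem_setOf_eq,
    Matrix.cons_val_zero, Matrix.cons_val_one, Matrix.head_cons, Matrix.cons_val_two,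
    Matrix.tail_cons, PiLp.toLp_apply]
  · linarith
  · nlinarith [pow_nonneg hs0 3]
  · rw [show -s * -s^3 = (s^2)^2 by ring, Real.sqrt_sq (by positivity)]

lemma kappa1_mem_W3 {s : ℝ} (hs : s ∈ Icc (0:ℝ) 1) : κ₁ s ∈ W3 := by
  obtain ⟨hs0, hs1⟩ := hs
  refine ⟨?_, ?_, ?_⟩ <;> simp only [κ₁, v3, W3, mem_setOf_eq,
    Matrix.cons_val_zero, Matrix.cons_val_one, Matrix.head_cons, Matrix.cons_val_two,
    Matrix.tail_cons, PiLp.toLp_apply]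
  · linarith
  · nlinarith
  · rw [show (-1 : ℝ) * -s^2 = s^2 by ring, Real.sqrt_sq hs0]

lemma gamma2_mem_W3 {t : ℝ} (ht : t ∈ Icc (0:ℝ) ((2 + Real.sqrt 7) / 3)) : γ₂ t ∈ W3 := by
  obtain ⟨ht0, ht1⟩ := ht
  refine ⟨?_, ?_, ?_⟩ <;> simp only [γ₂, v3, W3, mem_setOf_eq,
    Matrix.cons_val_zero, Matrix.cons_val_one, Matrix.head_cons, Matrix.cons_val_two,
    Matrix.tail_cons, PiLp.toLp_apply]
  · linarith
  · exact le_rfl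
  · rw [mul_zero, Real.sqrt_zero]; norm_num; positivity

lemma kappa2_mem_W3 {t : ℝ} (ht : t ∈ Icc (0:ℝ) ((2 + Real.sqrt 7) / 3)) : κ₂ t ∈ W3 := by
  obtain ⟨ht0, ht1⟩ := ht
  refine ⟨?_, ?_, ?_⟩ <;> simp only [κ₂, v3, W3, mem_setOf_eq,
    Matrix.cons_val_zero, Matrix.cons_val_one, Matrix.head_cons, Matrix.cons_val_two,
    Matrix.tail_cons, PiLp.toLp_apply]
  · linarith
  · exact le_rfl
  · rw [mul_zero, Real.sqrt_zero]; norm_num; linarith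

lemma Cset_subset_W3 : Cset ⊆ W3 := by
  apply convexHull_min _ convex_W3
  rintro v (⟨s, hs, rfl⟩ | ⟨t, ht, rfl⟩)
  · exact gamma1_mem_W3 hs
  · exact gamma2_mem_W3 ht

lemma Dhull_subset_W3 : Dhull ⊆ W3 := by
  apply convexHull_min _ convex_W3
  rintro v (⟨s, hs, rfl⟩ | ⟨t, ht, rfl⟩)
  · exact kappa1_mem_W3 hs
  · exact kappa2_mem_W3 ht

lemma Tcone_subset_W3 : Tcone ⊆ W3 := by
  rw [Tcone_eq]
  apply closure_minimal _ isClosed_W3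
  rintro v ⟨c, hc, p, hp, rfl⟩
  exact smul_mem_W3 hc (Dhull_subset_W3 hp)

end CubicAux
section Part1

lemma continuous_kappa1 : Continuous κ₁ := by
  unfold κ₁ v3
  apply (PiLp.continuous_toLp 2 _).comp
  apply continuous_pi
  intro i
  fin_cases i <;> simp <;> fun_prop

def S1 : Set (EuclideanSpace ℝ (Fin 3)) :=
  {d | ∃ ε : ℝ, 0 < ε ∧ (0 : EuclideanSpace ℝ (Fin 3)) + ε • d ∈ Cset}

lemma TangCone_zero_Cset : TangCone (0 : EuclideanSpace ℝ (Fin 3)) Cset = closure S1 := rfl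

lemma preT_convex : Convex ℝ preT := by
  rintro v ⟨c1, hc1, p1, hp1, rfl⟩ w ⟨c2, hc2, p2, hp2, rfl⟩ a b ha hb hab
  rcases eq_or_lt_of_le (show (0:ℝ) ≤ a*c1 + b*c2 by positivity) with h | h
  · refine ⟨0, le_rfl, p1, hp1, ?_⟩
    have h1 : a * c1 = 0 := by nlinarith [mul_nonneg ha hc1, mul_nonneg hb hc2]
    have h2 : b * c2 = 0 := by nlinarith [mul_nonneg ha hc1, mul_nonneg hb hc2]
    simp [smul_smul, h1, h2]
  · have hc : a*c1 + b*c2 ≠ 0 := ne_of_gt h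
    refine ⟨a*c1 + b*c2, le_of_lt h, (a*c1/(a*c1 + b*c2)) • p1 + (b*c2/(a*c1 + b*c2)) • p2,
      ?_, ?_⟩
    · exact convex_convexHull ℝ _ hp1 hp2 (by positivity) (by positivity) (by field_simp)
    · rw [smul_add, smul_smul, smul_smul, smul_smul, smul_smul]
      congr 2 <;> field_simp
  
lemma Cset_subset_preT : Cset ⊆ preT := by
  apply convexHull_min _ preT_convex
  rintro v (⟨s, hs, rfl⟩ | ⟨t, ht, rfl⟩)
  · exact ⟨s, hs.1, κ₁ s, kappa1_mem_Dhull hs, gamma1_eq_smul s⟩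
  · exact ⟨t, ht.1, κ₂ t, kappa2_mem_Dhull ht, gamma2_eq_smul t⟩

lemma S1_subset_preT : S1 ⊆ preT := by
  rintro d ⟨ε, hε, hm⟩
  rw [zero_add] at hm
  obtain ⟨c, hc, p, hp, hEq⟩ := Cset_subset_preT hm
  refine ⟨ε⁻¹ * c, by positivity, p, hp, ?_⟩
  have : d = ε⁻¹ • (ε • d) := by rw [smul_smul, inv_mul_cancel₀ (ne_of_gt hε), one_smul]
  rw [this, hEq, smul_smul]

lemma S1_convex : Convex ℝ S1 := feas_convex (convex_convexHull ℝ _) zero_mem_Cset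

lemma zero_mem_S1 : (0 : EuclideanSpace ℝ (Fin 3)) ∈ S1 :=
  ⟨1, one_pos, by simpa using zero_mem_Cset⟩

lemma smul_mem_S1 {c : ℝ} (hc : 0 < c) {d : EuclideanSpace ℝ (Fin 3)} (hd : d ∈ S1) :
    c • d ∈ S1 := by
  obtain ⟨ε, hε, hm⟩ := hd
  refine ⟨ε/c, by positivity, ?_⟩
  rw [zero_add] at hm ⊢
  rw [smul_smul, div_mul_cancel₀ _ (ne_of_gt hc)]
  exact hm

lemma kappa1_mem_closS1 : ∀ s ∈ Icc (0:ℝ) 1, κ₁ s ∈ closure S1 := by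
  have base : ∀ s : ℝ, 0 < s → s ≤ 1 → κ₁ s ∈ S1 := by
    intro s hs0 hs1
    exact ⟨s, hs0, by rw [zero_add, ← gamma1_eq_smul]; exact gamma1_mem_Cset ⟨le_of_lt hs0, hs1⟩⟩
  rintro s ⟨hs0, hs1⟩
  rcases eq_or_lt_of_le hs0 with h | h
  · subst h
    have htend : Filter.Tendsto (fun n : ℕ => κ₁ (1/(n+1))) atTop (nhds (κ₁ 0)) := by
      exact (continuous_kappa1.tendsto 0).comp tendsto_one_div_add_atTop_nhds_zero_nat
    refine mem_closure_of_tendsto htend (Filter.Eventually.of_forall fun n => ?_)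
    have h1 : (0:ℝ) < 1/(n+1) := by positivity
    have h2 : (1:ℝ)/(n+1) ≤ 1 := by
      rw [div_le_one (by positivity)]
      simp
    exact base _ h1 h2
  · exact subset_closure (base s h hs1)

lemma kappa2_mem_closS1 : ∀ t ∈ Icc (0:ℝ) ((2 + Real.sqrt 7) / 3), κ₂ t ∈ closure S1 := by
  rintro t ⟨ht0, ht1⟩
  rcases eq_or_lt_of_le ht0 with h | h
  · subst h
    rw [kappa2_zero]
    exact kappa1_mem_closS1 0 ⟨le_rfl, zero_le_one⟩
  · exact subset_closure
      ⟨t, h, by rw [zero_add, ← gamma2_eq_smul]; exact gamma2_mem_Cset ⟨ht0, ht1⟩⟩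

lemma Dhull_subset_closS1 : Dhull ⊆ closure S1 := by
  apply convexHull_min _ S1_convex.closure
  rintro v (⟨s, hs, rfl⟩ | ⟨t, ht, rfl⟩)
  · exact kappa1_mem_closS1 s hs
  · exact kappa2_mem_closS1 t ht

lemma preT_subset_closS1 : preT ⊆ closure S1 := by
  rintro v ⟨c, hc, p, hp, rfl⟩
  rcases eq_or_lt_of_le hc with h | h
  · rw [← h, zero_smul]
    exact subset_closure zero_mem_S1
  · exact map_mem_closure (continuous_const_smul c) (Dhull_subset_closS1 hp)
      (fun y hy => smul_mem_S1 h hy)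

lemma part1 : TangCone (0 : EuclideanSpace ℝ (Fin 3)) Cset = Tcone := by
  rw [TangCone_zero_Cset, Tcone_eq]
  apply subset_antisymm
  · exact closure_mono S1_subset_preT
  · exact closure_minimal preT_subset_closS1 isClosed_closure

end Part1
section Parts234

lemma eq_zero_pair {a b u v : ℝ} (ha : 0 < a) (hb : 0 < b) (hu : u ≤ 0) (hv : v ≤ 0)
    (h : a*u + b*v = 0) : u = 0 ∧ v = 0 := by
  have h1 : a*u ≤ 0 := mul_nonpos_iff.2 (Or.inl ⟨ha.le, hu⟩)
  have h2 : b*v ≤ 0 := mul_nonpos_iff.2 (Or.inl ⟨hb.le, hv⟩)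
  have h3 : a*u = 0 := by linarith
  have h4 : b*v = 0 := by linarith
  exact ⟨(mul_eq_zero.1 h3).resolve_left (ne_of_gt ha),
    (mul_eq_zero.1 h4).resolve_left (ne_of_gt hb)⟩

lemma inner3 (p x : EuclideanSpace ℝ (Fin 3)) :
    ⟪p, x⟫ = p 0 * x 0 + p 1 * x 1 + p 2 * x 2 := by
  simp [PiLp.inner_apply, Fin.sum_univ_three]; ring

lemma inner2 (p x : EuclideanSpace ℝ (Fin 2)) :
    ⟪p, x⟫ = p 0 * x 0 + p 1 * x 1 := by
  simp [PiLp.inner_apply, Fin.sum_univ_two]; ring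

def Fray : Set (EuclideanSpace ℝ (Fin 3)) := {v | v 0 ≤ 0 ∧ v 1 = 0 ∧ v 2 = 0}

lemma Fray_subset_Tcone : Fray ⊆ Tcone := by
  rintro v ⟨h0, h1, h2⟩
  rw [Tcone_eq]
  refine subset_closure ⟨-v 0, by linarith, κ₁ 0, kappa1_mem_Dhull ⟨le_rfl, zero_le_one⟩, ?_⟩
  ext i
  fin_cases i
  · simp [κ₁, v3]
  · simp [κ₁, v3, h1]
  · simp [κ₁, v3, h2]

lemma Fray_convex : Convex ℝ Fray := by
  rintro p ⟨hp0, hp1, hp2⟩ q ⟨hq0, hq1, hq2⟩ a b ha hb hab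
  have e0 : (a • p + b • q) 0 = a * p 0 + b * q 0 := by simp
  have e1 : (a • p + b • q) 1 = a * p 1 + b * q 1 := by simp
  have e2 : (a • p + b • q) 2 = a * p 2 + b * q 2 := by simp
  refine ⟨?_, ?_, ?_⟩
  · rw [e0]; nlinarith
  · rw [e1, hp1, hq1]; ring
  · rw [e2, hp2, hq2]; ring

lemma Fray_closed : IsClosed Fray := by
  have c0 : Continuous fun p : EuclideanSpace ℝ (Fin 3) => p 0 := by fun_prop
  have c1 : Continuous fun p : EuclideanSpace ℝ (Fin 3) => p 1 := by fun_prop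
  have c2 : Continuous fun p : EuclideanSpace ℝ (Fin 3) => p 2 := by fun_prop
  exact IsClosed.inter (isClosed_le c0 continuous_const)
    (IsClosed.inter (isClosed_eq c1 continuous_const) (isClosed_eq c2 continuous_const))

lemma zero_mem_Fray : (0 : EuclideanSpace ℝ (Fin 3)) ∈ Fray := ⟨le_rfl, rfl, rfl⟩

lemma Fray_properface : IsProperFaceOf Fray Tcone := by
  refine ⟨⟨Fray_subset_Tcone, Fray_convex, Fray_closed, ?_⟩, ⟨0, zero_mem_Fray⟩, ?_⟩
  · rintro x ⟨hx0, hx1, hx2⟩ y hy z hz ⟨a, b, ha, hb, hab, hsum⟩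
    obtain ⟨hy0, hy2, hy1⟩ := Tcone_subset_W3 hy
    obtain ⟨hz0, hz2, hz1⟩ := Tcone_subset_W3 hz
    have s2 : a * y 2 + b * z 2 = 0 := by
      have := congrFun (congrArg WithLp.ofLp hsum) 2
      simpa [hx2] using this
    obtain ⟨hy2', hz2'⟩ := eq_zero_pair ha hb hy2 hz2 s2
    rw [hy2', mul_zero, Real.sqrt_zero] at hy1
    rw [hz2', mul_zero, Real.sqrt_zero] at hz1
    have s1 : a * (-(y 1)) + b * (-(z 1)) = 0 := by
      have := congrFun (congrArg WithLp.ofLp hsum) 1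
      simp [hx1] at this
      linarith
    obtain ⟨hy1', hz1'⟩ := eq_zero_pair ha hb (by linarith) (by linarith) s1
    exact ⟨⟨hy0, by linarith, hy2'⟩, ⟨hz0, by linarith, hz2'⟩⟩
  · intro hEq
    have h := kappa2_mem_Tcone ⟨zero_le_one, one_le_TT⟩
    rw [← hEq] at h
    have := h.2.1
    norm_num [κ₂, v3] at this

lemma part2 : ¬ FaciallyExposed Tcone := by
  intro hFE
  obtain ⟨p, hp⟩ := hFE Fray Fray_properface
  have h0F : (0 : EuclideanSpace ℝ (Fin 3)) ∈ Fray := zero_mem_Fray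
  have hk0F : κ₁ 0 ∈ Fray := by
    refine ⟨?_, ?_, ?_⟩ <;> simp [κ₁, v3]
  have hk0T : κ₁ 0 ∈ Tcone := kappa1_mem_Tcone ⟨le_rfl, zero_le_one⟩
  have h0T : (0 : EuclideanSpace ℝ (Fin 3)) ∈ Tcone := Fray_subset_Tcone zero_mem_Fray
  rw [hp] at h0F hk0F
  have hmax : ∀ y ∈ Tcone, ⟪p, y⟫ ≤ 0 := by
    intro y hy
    have := h0F.2 y hy
    rwa [inner_zero_right] at this
  have hk0val : ⟪p, κ₁ 0⟫ = -(p 0) := by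
    rw [inner3]; simp [κ₁, v3]
  have hp0 : p 0 = 0 := by
    have h1 : ⟪p, κ₁ 0⟫ ≤ 0 := hmax _ hk0T
    have h2 : (0:ℝ) ≤ ⟪p, κ₁ 0⟫ := by
      have := hk0F.2 0 h0T
      rwa [inner_zero_right] at this
    rw [hk0val] at h1 h2
    linarith
  have hp1 : p 1 = 0 := by
    have hple : p 1 ≤ 0 := by
      have := hmax _ (kappa2_mem_Tcone ⟨zero_le_one, one_le_TT⟩)
      rw [inner3] at this
      simp [κ₂, v3, hp0] at this
      linarith
    rcases eq_or_lt_of_le hple with h | h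
    · exact h
    · exfalso
      obtain ⟨s, hs0, hs1, hneg⟩ := pos_small (B := p 2) h
      have := hmax _ (kappa1_mem_Tcone ⟨le_of_lt hs0, hs1⟩)
      rw [inner3] at this
      simp [κ₁, v3, hp0] at this
      nlinarith
  have hfin : κ₂ 1 ∈ {x ∈ Tcone | ∀ y ∈ Tcone, ⟪p, y⟫ ≤ ⟪p, x⟫} := by
    refine ⟨kappa2_mem_Tcone ⟨zero_le_one, one_le_TT⟩, fun y hy => ?_⟩
    have hv : ⟪p, κ₂ 1⟫ = 0 := by
      rw [inner3]; simp [κ₂, v3, hp0, hp1]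
    rw [hv]
    exact hmax y hy
  rw [← hp] at hfin
  have := hfin.2.1
  norm_num [κ₂, v3] at this

def Q2 : Set (EuclideanSpace ℝ (Fin 2)) := {q | q 1 ≤ 0 ∧ -Real.sqrt (-q 1) ≤ q 0}

lemma convex_Q2 : Convex ℝ Q2 := by
  rintro p ⟨hp1, hp0⟩ q ⟨hq1, hq0⟩ a b ha hb hab
  have e0 : (a • p + b • q) 0 = a * p 0 + b * q 0 := by simp
  have e1 : (a • p + b • q) 1 = a * p 1 + b * q 1 := by simp
  constructor
  · rw [e1]; nlinarith
  · rw [e0, e1]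
    have key := sqrt_concave2 ha hb (neg_nonneg.2 hp1) zero_le_one (neg_nonneg.2 hq1) zero_le_one
    rw [mul_one, mul_one] at key
    have e : (a * -p 1 + b * -q 1) * (a * 1 + b * 1) = -(a * p 1 + b * q 1) := by
      rw [mul_one, mul_one, hab]; ring
    rw [e] at key
    have h1 : a * (-Real.sqrt (-p 1)) ≤ a * p 0 := mul_le_mul_of_nonneg_left hp0 ha
    have h2 : b * (-Real.sqrt (-q 1)) ≤ b * q 0 := mul_le_mul_of_nonneg_left hq0 hb
    nlinarith

lemma Dslice_subset_Q2 : Dslice ⊆ Q2 := by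
  apply convexHull_min _ convex_Q2
  rintro q (⟨s, hs, rfl⟩ | ⟨t, ht, rfl⟩)
  · constructor
    · simp [v2]; positivity
    · have e1 : (v2 (-s) (-s^2)) 1 = -s^2 := by simp [v2]
      have e0 : (v2 (-s) (-s^2)) 0 = -s := by simp [v2]
      rw [e0, e1, neg_neg, Real.sqrt_sq hs.1]
  · constructor
    · simp [v2]
    · have e1 : (v2 t 0) 1 = 0 := by simp [v2]
      have e0 : (v2 t 0) 0 = t := by simp [v2]
      rw [e0, e1, neg_zero, Real.sqrt_zero]
      linarith [ht.1]

lemma zero_mem_Dslice : (0 : EuclideanSpace ℝ (Fin 2)) ∈ Dslice := by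
  apply subset_convexHull
  left
  exact ⟨0, ⟨le_rfl, zero_le_one⟩, by ext i; fin_cases i <;> simp [v2]⟩

lemma part3 : IsFaceOf {(0 : EuclideanSpace ℝ (Fin 2))} Dslice := by
  refine ⟨singleton_subset_iff.2 zero_mem_Dslice, convex_singleton 0, isClosed_singleton, ?_⟩
  rintro x hx y hy z hz ⟨a, b, ha, hb, hab, hsum⟩
  rw [mem_singleton_iff] at hx
  subst hx
  obtain ⟨hy1, hy0⟩ := Dslice_subset_Q2 hy
  obtain ⟨hz1, hz0⟩ := Dslice_subset_Q2 hz
  have s1 : a * y 1 + b * z 1 = 0 := by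
    have := congrFun (congrArg WithLp.ofLp hsum) 1
    simpa using this
  obtain ⟨hy1', hz1'⟩ := eq_zero_pair ha hb hy1 hz1 s1
  rw [hy1', neg_zero, Real.sqrt_zero] at hy0
  rw [hz1', neg_zero, Real.sqrt_zero] at hz0
  have s0 : a * (-(y 0)) + b * (-(z 0)) = 0 := by
    have := congrFun (congrArg WithLp.ofLp hsum) 0
    simp at this
    linarith
  obtain ⟨hy0', hz0'⟩ := eq_zero_pair ha hb (by linarith) (by linarith) s0
  constructor
  · rw [mem_singleton_iff]
    ext i
    fin_cases i
    · show y 0 = 0; linarith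
    · show y 1 = 0; exact hy1'
  · rw [mem_singleton_iff]
    ext i
    fin_cases i
    · show z 0 = 0; linarith
    · show z 1 = 0; exact hz1'

lemma part4 : ¬ IsExposedFaceOf {(0 : EuclideanSpace ℝ (Fin 2))} Dslice := by
  rintro ⟨p, hp⟩
  have h0 : (0 : EuclideanSpace ℝ (Fin 2)) ∈ ({0} : Set (EuclideanSpace ℝ (Fin 2))) := rfl
  rw [hp] at h0
  have hmax : ∀ y ∈ Dslice, ⟪p, y⟫ ≤ 0 := by
    intro y hy
    have := h0.2 y hy
    rwa [inner_zero_right] at this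
  have hb1 : v2 1 0 ∈ Dslice :=
    subset_convexHull ℝ _ (Or.inr ⟨1, ⟨zero_le_one, one_le_TT⟩, rfl⟩)
  have hp0le : p 0 ≤ 0 := by
    have := hmax _ hb1
    rw [inner2] at this
    simp [v2] at this
    linarith
  have hp0 : p 0 = 0 := by
    rcases eq_or_lt_of_le hp0le with h | h
    · exact h
    · exfalso
      obtain ⟨s, hs0, hs1, hneg⟩ := pos_small (B := p 1) h
      have has : v2 (-s) (-s^2) ∈ Dslice :=
        subset_convexHull ℝ _ (Or.inl ⟨s, ⟨le_of_lt hs0, hs1⟩, rfl⟩)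
      have := hmax _ has
      rw [inner2] at this
      simp [v2] at this
      nlinarith
  have hfin : v2 1 0 ∈ {x ∈ Dslice | ∀ y ∈ Dslice, ⟪p, y⟫ ≤ ⟪p, x⟫} := by
    refine ⟨hb1, fun y hy => ?_⟩
    have hv : ⟪p, v2 1 0⟫ = 0 := by
      rw [inner2]; simp [v2, hp0]
    rw [hv]
    exact hmax y hy
  rw [← hp] at hfin
  rw [mem_singleton_iff] at hfin
  have := congrFun (congrArg WithLp.ofLp hfin) 0
  norm_num [v2] at this

end Parts234
section Part5

lemma nonpos_of_mul_pos' {e x : ℝ} (he : 0 < e) (h : e * x ≤ 0) : x ≤ 0 := by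
  rw [← mul_zero e] at h
  exact le_of_mul_le_mul_left h he

lemma nonneg_of_mul_pos' {e x : ℝ} (he : 0 < e) (h : 0 ≤ e * x) : 0 ≤ x := by
  rw [← mul_zero e] at h
  exact le_of_mul_le_mul_left h he

def W4 : Set (EuclideanSpace ℝ (Fin 4)) :=
  {v | v 0 ≤ 0 ∧ v 2 ≤ 0 ∧ -Real.sqrt (v 0 * v 2) ≤ v 1}

lemma isClosed_W4 : IsClosed W4 := by
  have c0 : Continuous fun p : EuclideanSpace ℝ (Fin 4) => p 0 := by fun_prop
  have c1 : Continuous fun p : EuclideanSpace ℝ (Fin 4) => p 1 := by fun_prop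
  have c2 : Continuous fun p : EuclideanSpace ℝ (Fin 4) => p 2 := by fun_prop
  exact IsClosed.inter (isClosed_le c0 continuous_const)
    (IsClosed.inter (isClosed_le c2 continuous_const)
      (isClosed_le (((c0.mul c2).sqrt).neg) c1))

lemma preK_subset_W4 : preK ⊆ W4 := by
  rintro v ⟨c, hc, p, hp, rfl⟩
  obtain ⟨h0, h2, h1⟩ := smul_mem_W3 hc (Cset_subset_W3 hp)
  have e0 : (c • lift p) 0 = (c • p) 0 := by simp [lift, v4]
  have e1 : (c • lift p) 1 = (c • p) 1 := by simp [lift, v4]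
  have e2 : (c • lift p) 2 = (c • p) 2 := by simp [lift, v4]
  exact ⟨by rw [e0]; exact h0, by rw [e2]; exact h2, by rw [e0, e1, e2]; exact h1⟩

lemma Kcone_subset_W4 : Kcone ⊆ W4 := by
  rw [Kcone_eq]
  exact closure_minimal preK_subset_W4 isClosed_W4

lemma T1_subset_W4 : TangCone (lift 0) Kcone ⊆ W4 := by
  apply closure_minimal _ isClosed_W4
  rintro d ⟨ε, hε, hm⟩
  obtain ⟨h0, h2, h1⟩ := Kcone_subset_W4 hm
  have e0 : (lift 0 + ε • d) 0 = ε * d 0 := by simp [lift, v4]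
  have e1 : (lift 0 + ε • d) 1 = ε * d 1 := by simp [lift, v4]
  have e2 : (lift 0 + ε • d) 2 = ε * d 2 := by simp [lift, v4]
  rw [e0] at h0
  rw [e2] at h2
  rw [e0, e1, e2] at h1
  refine ⟨nonpos_of_mul_pos' hε h0, nonpos_of_mul_pos' hε h2, ?_⟩
  rw [show ε * d 0 * (ε * d 2) = ε^2 * (d 0 * d 2) by ring,
    Real.sqrt_mul (sq_nonneg ε), Real.sqrt_sq hε.le] at h1
  by_contra hcon
  push_neg at hcon
  have := mul_lt_mul_of_pos_left hcon hε
  rw [mul_neg] at this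
  linarith

lemma lift0_mem_preK : lift 0 ∈ preK := ⟨1, zero_le_one, 0, zero_mem_Cset, (one_smul ℝ _).symm⟩

lemma lift0_mem_K : lift 0 ∈ Kcone := subset_closure lift0_mem_preK

lemma lift_mem_K {p : EuclideanSpace ℝ (Fin 3)} (hp : p ∈ Cset) : lift p ∈ Kcone :=
  subset_closure ⟨1, zero_le_one, p, hp, (one_smul ℝ _).symm⟩

def uvec (s : ℝ) : EuclideanSpace ℝ (Fin 4) := v4 (-1) (-s) (-s^2) 0

lemma continuous_uvec : Continuous uvec := by
  unfold uvec v4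
  apply (PiLp.continuous_toLp 2 _).comp
  apply continuous_pi
  intro i
  fin_cases i <;> simp <;> fun_prop

lemma lift0_add_smul_uvec (s : ℝ) : lift 0 + s • uvec s = lift (γ₁ s) := by
  ext i
  fin_cases i <;> simp [lift, v4, uvec, γ₁, v3] <;> ring

lemma uvec_mem_T1 {s : ℝ} (hs : s ∈ Icc (0:ℝ) 1) : uvec s ∈ TangCone (lift 0) Kcone := by
  have base : ∀ s : ℝ, 0 < s → s ≤ 1 → uvec s ∈
      {d : EuclideanSpace ℝ (Fin 4) | ∃ ε : ℝ, 0 < ε ∧ lift 0 + ε • d ∈ Kcone} := by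
    intro s hs0 hs1
    exact ⟨s, hs0, by
      rw [lift0_add_smul_uvec]
      exact lift_mem_K (gamma1_mem_Cset ⟨hs0.le, hs1⟩)⟩
  rcases eq_or_lt_of_le hs.1 with h | h
  · rw [← h]
    have htend : Filter.Tendsto (fun n : ℕ => uvec (1/(n+1))) atTop (nhds (uvec 0)) :=
      (continuous_uvec.tendsto 0).comp tendsto_one_div_add_atTop_nhds_zero_nat
    refine mem_closure_of_tendsto htend (Filter.Eventually.of_forall fun n => base _ (by positivity) ?_)
    rw [div_le_one (by positivity)]
    simp
  · exact subset_closure (base s h hs.2)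

def x1 : EuclideanSpace ℝ (Fin 4) := v4 (-1) 0 0 0

lemma x1_eq_uvec : x1 = uvec 0 := by
  ext i
  fin_cases i <;> simp [x1, uvec, v4]

lemma x1_mem_T1 : x1 ∈ TangCone (lift 0) Kcone := by
  rw [x1_eq_uvec]
  exact uvec_mem_T1 ⟨le_rfl, zero_le_one⟩

def E1 : Set (EuclideanSpace ℝ (Fin 4)) :=
  TangCone (lift 0) Kcone ∩ {v | v 2 = 0}

lemma x1_mem_E1 : x1 ∈ E1 := ⟨x1_mem_T1, by simp [x1, v4]⟩

def u2 : EuclideanSpace ℝ (Fin 4) := v4 (-1) 1 0 0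

lemma u2_mem_E1 : u2 ∈ E1 := by
  constructor
  · refine subset_closure ⟨1, one_pos, ?_⟩
    have h : lift 0 + (1:ℝ) • u2 = lift (γ₂ 1) := by
      ext i
      fin_cases i <;> simp [lift, v4, u2, γ₂, v3]
    rw [h]
    exact lift_mem_K (gamma2_mem_Cset ⟨zero_le_one, one_le_TT⟩)
  · simp [u2, v4]

lemma zero_mem_T1 : (0 : EuclideanSpace ℝ (Fin 4)) ∈ TangCone (lift 0) Kcone :=
  subset_closure ⟨1, one_pos, by simpa using lift0_mem_K⟩

lemma preK_convex : Convex ℝ preK := by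
  rintro v ⟨c1, hc1, p1, hp1, rfl⟩ w ⟨c2, hc2, p2, hp2, rfl⟩ a b ha hb hab
  rcases eq_or_lt_of_le (show (0:ℝ) ≤ a*c1 + b*c2 by positivity) with h | h
  · refine ⟨0, le_rfl, p1, hp1, ?_⟩
    have h1 : a * c1 = 0 := by nlinarith [mul_nonneg ha hc1, mul_nonneg hb hc2]
    have h2 : b * c2 = 0 := by nlinarith [mul_nonneg ha hc1, mul_nonneg hb hc2]
    simp [smul_smul, h1, h2]
  · have hc : a*c1 + b*c2 ≠ 0 := ne_of_gt h
    refine ⟨a*c1 + b*c2, h.le,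
      (a*c1/(a*c1 + b*c2)) • p1 + (b*c2/(a*c1 + b*c2)) • p2,
      convex_convexHull ℝ _ hp1 hp2 (by positivity) (by positivity) (by field_simp), ?_⟩
    ext i
    fin_cases i <;> simp [lift, v4] <;> field_simp <;> ring

lemma Kcone_convex : Convex ℝ Kcone := by
  rw [Kcone_eq]
  exact preK_convex.closure

lemma E1_properface : IsProperFaceOf E1 (TangCone (lift 0) Kcone) := by
  refine ⟨⟨inter_subset_left, ?_, ?_, ?_⟩, ⟨0, zero_mem_T1, rfl⟩, ?_⟩
  · refine Convex.inter (tangCone_convex Kcone_convex lift0_mem_K) ?_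
    intro p hp q hq a b ha hb hab
    simp only [mem_setOf_eq] at hp hq ⊢
    simp [hp, hq]
  · have c2 : Continuous fun v : EuclideanSpace ℝ (Fin 4) => v 2 := by fun_prop
    exact IsClosed.inter isClosed_closure (isClosed_eq c2 continuous_const)
  · rintro x ⟨hxT, hx2⟩ y hy z hz ⟨a, b, ha, hb, hab, hsum⟩
    obtain ⟨_, hy2, _⟩ := T1_subset_W4 hy
    obtain ⟨_, hz2, _⟩ := T1_subset_W4 hz
    have hx2' : x 2 = 0 := hx2
    have s2 : a * y 2 + b * z 2 = 0 := by
      have := congrFun (congrArg WithLp.ofLp hsum) 2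
      simpa [hx2'] using this
    obtain ⟨hy2', hz2'⟩ := eq_zero_pair ha hb hy2 hz2 s2
    exact ⟨⟨hy, hy2'⟩, ⟨hz, hz2'⟩⟩
  · intro hEq
    have h : uvec 1 ∈ E1 := by
      rw [hEq]
      exact uvec_mem_T1 ⟨zero_le_one, le_rfl⟩
    have := h.2
    change -(1:ℝ)^2 = 0 at this
    norm_num at this

def evec (s : ℝ) : EuclideanSpace ℝ (Fin 4) := v4 0 (-1) (-s) 0

def dstar : EuclideanSpace ℝ (Fin 4) := v4 0 (-1) 0 0

lemma continuous_evec : Continuous evec := by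
  unfold evec v4
  apply (PiLp.continuous_toLp 2 _).comp
  apply continuous_pi
  intro i
  fin_cases i <;> simp <;> fun_prop

lemma evec_zero : evec 0 = dstar := by
  ext i
  fin_cases i <;> simp [evec, dstar, v4]

lemma x1_add_smul_evec (s : ℝ) : x1 + s • evec s = uvec s := by
  ext i
  fin_cases i <;> simp [x1, evec, uvec, v4] <;> ring

lemma dstar_mem_TC_T1 : dstar ∈ TangCone x1 (TangCone (lift 0) Kcone) := by
  have base : ∀ s : ℝ, 0 < s → s ≤ 1 → evec s ∈
      {d : EuclideanSpace ℝ (Fin 4) | ∃ ε : ℝ, 0 < ε ∧ x1 + ε • d ∈ TangCone (lift 0) Kcone} := by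
    intro s hs0 hs1
    exact ⟨s, hs0, by rw [x1_add_smul_evec]; exact uvec_mem_T1 ⟨hs0.le, hs1⟩⟩
  rw [← evec_zero]
  have htend : Filter.Tendsto (fun n : ℕ => evec (1/(n+1))) atTop (nhds (evec 0)) :=
    (continuous_evec.tendsto 0).comp tendsto_one_div_add_atTop_nhds_zero_nat
  refine mem_closure_of_tendsto htend (Filter.Eventually.of_forall fun n => base _ (by positivity) ?_)
  rw [div_le_one (by positivity)]
  simp

lemma dstar_mem_span : dstar ∈ (Submodule.span ℝ E1 : Set (EuclideanSpace ℝ (Fin 4))) := by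
  have h : dstar = x1 - u2 := by
    ext i
    fin_cases i <;> simp [dstar, x1, u2, v4]
  rw [h]
  exact Submodule.sub_mem _ (Submodule.subset_span x1_mem_E1) (Submodule.subset_span u2_mem_E1)

lemma dstar_not_mem : dstar ∉ TangCone x1 E1 := by
  intro hmem
  have hsub : TangCone x1 E1 ⊆ {d : EuclideanSpace ℝ (Fin 4) | 0 ≤ d 1} := by
    have c1 : Continuous fun v : EuclideanSpace ℝ (Fin 4) => v 1 := by fun_prop
    apply closure_minimal _ (isClosed_le continuous_const c1)
    rintro d ⟨ε, hε, hT, h2⟩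
    obtain ⟨_, _, h1⟩ := T1_subset_W4 hT
    have h2' : (x1 + ε • d) 2 = 0 := h2
    rw [h2', mul_zero, Real.sqrt_zero, neg_zero] at h1
    have e1 : (x1 + ε • d) 1 = ε * d 1 := by simp [x1, v4]
    rw [e1] at h1
    exact nonneg_of_mul_pos' hε h1
  have := hsub hmem
  norm_num [dstar, v4] at this

lemma part5 : ¬ StronglyTangentiallyExposed Kcone := by
  intro h
  have hT1 : TangCone (lift 0) Kcone ∈ TangIter Kcone 1 :=
    ⟨Kcone, rfl, lift 0, lift0_mem_K, rfl⟩
  have heq := h 1 _ hT1 E1 E1_properface x1 x1_mem_E1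
  have hd : dstar ∈ TangCone x1 (TangCone (lift 0) Kcone) ∩
      (Submodule.span ℝ E1 : Set (EuclideanSpace ℝ (Fin 4))) :=
    ⟨dstar_mem_TC_T1, dstar_mem_span⟩
  rw [heq] at hd
  exact dstar_not_mem hd

end Part5
/-- **Example.** The tangent cone to `K = cone(C × {1})` at the origin — which, read in the
slice `C`, is `T(0;C) = cl cone{κ₁ ∪ κ₂}` — is not facially exposed: its two-dimensional
slice `Dslice` has `{(0,0)}` as an unexposed face. In particular `K` is not strongly
tangentially exposed. -/
theorem cubic_example_tangent_cone_not_facially_exposed :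
    TangCone (0 : EuclideanSpace ℝ (Fin 3)) Cset = Tcone ∧
    ¬ FaciallyExposed Tcone ∧
    IsFaceOf {(0 : EuclideanSpace ℝ (Fin 2))} Dslice ∧
    ¬ IsExposedFaceOf {(0 : EuclideanSpace ℝ (Fin 2))} Dslice ∧
    ¬ StronglyTangentiallyExposed Kcone :=
  ⟨part1, part2, part3, part4, part5⟩

end CubicExample
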